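/- Let $r$ be an odd prime, and let $t, h, \ell$ be positive integers with $2h \le t$ and $r^h \nmid \ell$. Let $\beta$ be an integer coprime to $r$ whose multiplicative order modulo $r^t$ is $r^h$. Then $r^h$ does not divide $\Psi_\ell(\beta) = 1 + \beta + \cdots + \beta^{\ell - 1}$. -/

import Mathlib

theorem stmt_7 (r t h ℓ : ℕ) (hr : r.Prime) (hrodd : Odd r) (ht : 0 < t) (hh : 0 < h)
    (hℓ : 0 < ℓ) (h2h : 2 * h ≤ t) (hnd : ¬ r ^ h ∣ ℓ)
    (β : ℤ) (hcop : Int.gcd β r = 1)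
    (hord : orderOf (β : ZMod (r ^ t)) = r ^ h) :
    ¬ ((r : ℤ) ^ h ∣ ∑ i ∈ Finset.range ℓ, β ^ i) := by
  have hr2 : 2 ≤ r := hr.two_le
  haveI hrh : NeZero (r ^ h) := ⟨pow_ne_zero _ (by omega)⟩
  have hrI : Prime (r : ℤ) := Nat.prime_iff_prime_int.1 hr
  -- r does not divide β
  have hx : ¬ (r : ℤ) ∣ β := by
    intro hd
    have : (r : ℤ) ∣ Int.gcd β r := Int.dvd_coe_gcd hd dvd_rfl
    rw [hcop] at this
    have := Int.le_of_dvd one_pos this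
    omega
  -- β ^ (r ^ h) ≡ 1 mod r ^ t
  have hpow : ((r : ℤ)) ^ t ∣ β ^ (r ^ h) - 1 := by
    have h1 : (β : ZMod (r ^ t)) ^ (r ^ h) = 1 := by
      rw [← hord]; exact pow_orderOf_eq_one _
    have h2 : ((β ^ (r ^ h) - 1 : ℤ) : ZMod (r ^ t)) = 0 := by push_cast [h1]; ring
    have := (ZMod.intCast_zmod_eq_zero_iff_dvd _ _).1 h2
    rwa [Nat.cast_pow] at this
  -- r divides β - 1
  have hxy : (r : ℤ) ∣ β - 1 := by
    have hb : (β : ZMod r) ≠ 0 := by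
      intro h0
      exact hx (by rwa [ZMod.intCast_zmod_eq_zero_iff_dvd] at h0)
    have hbp : (β : ZMod r) ^ (r ^ h) = 1 := by
      have hdr : (r : ℤ) ∣ β ^ (r ^ h) - 1 :=
        dvd_trans (dvd_pow_self _ (by omega)) hpow
      have : ((β ^ (r ^ h) - 1 : ℤ) : ZMod r) = 0 :=
        (ZMod.intCast_zmod_eq_zero_iff_dvd _ _).2 hdr
      push_cast at this
      linear_combination this
    haveI : Fact r.Prime := ⟨hr⟩
    have hdvd1 : orderOf (β : ZMod r) ∣ r ^ h := orderOf_dvd_of_pow_eq_one hbp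
    have hdvd2 : orderOf (β : ZMod r) ∣ r - 1 :=
      orderOf_dvd_of_pow_eq_one (ZMod.pow_card_sub_one_eq_one hb)
    have hcop2 : Nat.Coprime (r ^ h) (r - 1) :=
      (Nat.coprime_pow_left_iff hh _ _).2 <| by
        have h1 : Nat.gcd r (r - 1) ∣ r := Nat.gcd_dvd_left _ _
        have h2 : Nat.gcd r (r - 1) ∣ r - 1 := Nat.gcd_dvd_right _ _
        have h3 := Nat.dvd_sub h1 h2
        have h4 : r - (r - 1) = 1 := by omega
        rw [h4] at h3
        exact Nat.dvd_one.1 h3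
    have hdg : orderOf (β : ZMod r) ∣ 1 := hcop2 ▸ Nat.dvd_gcd hdvd1 hdvd2
    have hb1 : (β : ZMod r) = 1 := orderOf_eq_one_iff.1 (Nat.dvd_one.1 hdg)
    have : ((β - 1 : ℤ) : ZMod r) = 0 := by push_cast [hb1]; ring
    exact (ZMod.intCast_zmod_eq_zero_iff_dvd _ _).1 this
  -- lifting the exponent
  have hlte : emultiplicity ((r : ℕ) : ℤ) (β ^ r ^ h - 1 ^ r ^ h) =
      emultiplicity ((r : ℕ) : ℤ) (β - 1) + h :=
    emultiplicity_pow_prime_pow_sub_pow_prime_pow hrI hrodd (by simpa using hxy) hx h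
  rw [one_pow] at hlte
  have h1 : (t : ℕ∞) ≤ emultiplicity ((r : ℕ) : ℤ) (β ^ r ^ h - 1) :=
    le_emultiplicity_of_pow_dvd hpow
  rw [hlte] at h1
  have h2 : ((h : ℕ∞) + h) ≤ emultiplicity ((r : ℕ) : ℤ) (β - 1) + h := by
    refine le_trans ?_ h1
    have : ((h + h : ℕ) : ℕ∞) ≤ (t : ℕ∞) := Nat.cast_le.2 (by omega)
    simpa using this
  have h3 : (h : ℕ∞) ≤ emultiplicity ((r : ℕ) : ℤ) (β - 1) :=
    (WithTop.add_le_add_iff_right (by exact_mod_cast WithTop.natCast_ne_top h)).1 h2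
  have hdvdh : (r : ℤ) ^ h ∣ β - 1 := pow_dvd_of_le_emultiplicity h3
  -- conclude
  intro hdvd
  have hb1 : (β : ZMod (r ^ h)) = 1 := by
    have : ((β - 1 : ℤ) : ZMod (r ^ h)) = 0 :=
      (ZMod.intCast_zmod_eq_zero_iff_dvd _ _).2 (by rwa [Nat.cast_pow])
    push_cast at this
    linear_combination this
  have hsum : ((∑ i ∈ Finset.range ℓ, β ^ i : ℤ) : ZMod (r ^ h)) = (ℓ : ZMod (r ^ h)) := by
    push_cast [hb1]
    simp
  have h0 : ((∑ i ∈ Finset.range ℓ, β ^ i : ℤ) : ZMod (r ^ h)) = 0 :=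
    (ZMod.intCast_zmod_eq_zero_iff_dvd _ _).2 (by rwa [Nat.cast_pow])
  rw [hsum] at h0
  exact hnd ((ZMod.natCast_eq_zero_iff _ _).1 h0)
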